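/- Let G be a countable amenable group and E ⊆ G a set of positive upper Banach density (positive upper density with respect to some Følner sequence). Then the difference set E E⁻¹ = {g h⁻¹ : g, h ∈ E} is left syndetic in G. -/

import Mathlib

open Filter

/-- A (left) Følner sequence in a group. -/
def IsFolner {G : Type*} [Group G] [DecidableEq G] (F : ℕ → Finset G) : Prop :=
  Tendsto (fun n => (F n).card) atTop atTop ∧
    ∀ g : G, Tendsto (fun n => ((F n ∩ (F n).image (g * ·)).card : ℝ) / (F n).card)
      atTop (nhds 1)

/-- Upper density of `E ⊆ G` with respect to a sequence of finite sets. -/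
noncomputable def upperDensity {G : Type*} [Group G] (F : ℕ → Finset G) (E : Set G) : ℝ :=
  Filter.limsup (fun n => ((E ∩ ↑(F n)).ncard : ℝ) / (F n).card) atTop

/-- `S` is left syndetic: finitely many left translates `t⁻¹ S` cover `G`. -/
def LeftSyndetic {G : Type*} [Group G] (S : Set G) : Prop :=
  ∃ T : Finset G, ∀ g : G, ∃ t ∈ T, t * g ∈ S

/-- If `E` has positive upper density with respect to some Følner sequence, then
`E E⁻¹` is left syndetic. -/
lemma good_card_bound {G : Type*} [Group G] [DecidableEq G]
    (E : Set G) (F : ℕ → Finset G) (hF : IsFolner F) (T : Finset G)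
    (hT : ∀ t ∈ T, ∀ t' ∈ T, t ≠ t' → Disjoint ((t * ·) '' E) ((t' * ·) '' E)) :
    (T.card : ℝ) * upperDensity F E ≤ 1 := by
  classical
  set a : ℕ → ℝ := fun n => ((E ∩ ↑(F n)).ncard : ℝ) / (F n).card with ha
  have ha0 : ∀ n, 0 ≤ a n := fun n => div_nonneg (by positivity) (by positivity)
  set c : ℕ → ℝ := fun n =>
    1 + ∑ t ∈ T, (1 - ((F n ∩ (F n).image (t⁻¹ * ·)).card : ℝ) / (F n).card) with hc
  -- c tends to 1
  have hsummand : ∀ t ∈ T, Tendsto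
      (fun n => 1 - ((F n ∩ (F n).image (t⁻¹ * ·)).card : ℝ) / (F n).card) atTop (nhds 0) := by
    intro t _
    have h1 := (tendsto_const_nhds (x := (1:ℝ)) (f := atTop)).sub (hF.2 t⁻¹)
    rw [sub_self] at h1
    exact h1
  have hsum0 : Tendsto
      (fun n => ∑ t ∈ T, (1 - ((F n ∩ (F n).image (t⁻¹ * ·)).card : ℝ) / (F n).card))
      atTop (nhds 0) := by
    have h := tendsto_finset_sum T hsummand
    rwa [Finset.sum_const_zero] at h
  have hctend : Tendsto c atTop (nhds 1) := by
    have h := (tendsto_const_nhds (x := (1:ℝ)) (f := atTop)).add hsum0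
    rwa [add_zero] at h
  -- eventual key inequality
  have hkey : ∀ᶠ n in atTop, (T.card : ℝ) * a n ≤ c n := by
    filter_upwards [hF.1.eventually_gt_atTop 0] with n hn
    set EF : Finset G := (F n).filter (· ∈ E) with hEF
    have hEFcard : (E ∩ ↑(F n)).ncard = EF.card := by
      rw [← Set.ncard_coe_finset]
      congr 1
      ext x
      simp [hEF, and_comm]
    set A : G → Finset G := fun t => (F n).filter (· ∈ (t * ·) '' E) with hA
    set B : G → Finset G := fun t => F n ∩ (F n).image (t⁻¹ * ·) with hB
    have hBsub : ∀ t, B t ⊆ F n := fun t => Finset.inter_subset_left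
    -- per-translate inequality (over ℕ)
    have hper : ∀ t : G, EF.card ≤ (A t).card + ((F n).card - (B t).card) := by
      intro t
      have hsub : EF ⊆ (EF ∩ B t) ∪ (F n \ B t) := by
        intro x hx
        by_cases hxB : x ∈ B t
        · exact Finset.mem_union.2 (Or.inl (Finset.mem_inter.2 ⟨hx, hxB⟩))
        · exact Finset.mem_union.2 (Or.inr (Finset.mem_sdiff.2
            ⟨(Finset.mem_filter.1 hx).1, hxB⟩))
      have h1 : EF.card ≤ (EF ∩ B t).card + (F n \ B t).card :=
        le_trans (Finset.card_le_card hsub) (Finset.card_union_le _ _)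
      have h2 : (F n \ B t).card = (F n).card - (B t).card := Finset.card_sdiff_of_subset (hBsub t)
      have h3 : (EF ∩ B t).card ≤ (A t).card := by
        apply Finset.card_le_card_of_injOn (fun x => t * x)
        · intro x hx
          obtain ⟨hx1, hx2⟩ := Finset.mem_inter.1 hx
          obtain ⟨hxF, hxE⟩ := Finset.mem_filter.1 hx1
          obtain ⟨hxF', hximg⟩ := Finset.mem_inter.1 hx2
          obtain ⟨y, hy, hxy⟩ := Finset.mem_image.1 hximg
          refine Finset.mem_filter.2 ⟨?_, ⟨x, hxE, rfl⟩⟩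
          have : t * x = y := by rw [← hxy]; group
          show t * x ∈ F n; rw [this]; exact hy
        · intro x _ y _ h
          exact mul_left_cancel h
      omega
    -- summing over T
    have hsum : ∑ t ∈ T, (A t).card ≤ (F n).card := by
      rw [← Finset.card_biUnion]
      · exact Finset.card_le_card (Finset.biUnion_subset.2 fun t _ => Finset.filter_subset _ _)
      · intro t ht t' ht' hne
        have hd := hT t ht t' ht' hne
        simp only [Finset.disjoint_left]
        intro x hx hx'
        have h1 := (Finset.mem_filter.1 hx).2
        have h2 := (Finset.mem_filter.1 hx').2
        exact Set.disjoint_left.1 hd h1 h2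
    have hnat : T.card * EF.card ≤ (F n).card + ∑ t ∈ T, ((F n).card - (B t).card) := by
      calc T.card * EF.card = ∑ _t ∈ T, EF.card := by
            rw [Finset.sum_const, smul_eq_mul]
        _ ≤ ∑ t ∈ T, ((A t).card + ((F n).card - (B t).card)) :=
            Finset.sum_le_sum fun t _ => hper t
        _ = ∑ t ∈ T, (A t).card + ∑ t ∈ T, ((F n).card - (B t).card) := Finset.sum_add_distrib
        _ ≤ (F n).card + ∑ t ∈ T, ((F n).card - (B t).card) := by omega
    -- cast to ℝ
    have hmpos : (0:ℝ) < ((F n).card : ℝ) := by exact_mod_cast hn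
    have hR : (T.card : ℝ) * (EF.card : ℝ) ≤
        ((F n).card : ℝ) + ∑ t ∈ T, (((F n).card : ℝ) - ((B t).card : ℝ)) := by
      calc (T.card : ℝ) * (EF.card : ℝ) = ((T.card * EF.card : ℕ) : ℝ) := by push_cast; ring
        _ ≤ (((F n).card + ∑ t ∈ T, ((F n).card - (B t).card) : ℕ) : ℝ) := by exact_mod_cast hnat
        _ = ((F n).card : ℝ) + ∑ t ∈ T, (((F n).card : ℝ) - ((B t).card : ℝ)) := by
            rw [Nat.cast_add, Nat.cast_sum]
            congr 1
            exact Finset.sum_congr rfl fun t _ => by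
              rw [Nat.cast_sub (Finset.card_le_card (hBsub t))]
    simp only [ha, hc]
    rw [hEFcard]
    have heq : (T.card : ℝ) * ((EF.card : ℝ) / ((F n).card : ℝ))
        = ((T.card : ℝ) * (EF.card : ℝ)) / ((F n).card : ℝ) := by ring
    rw [heq, div_le_iff₀ hmpos]
    calc (T.card : ℝ) * (EF.card : ℝ)
        ≤ ((F n).card : ℝ) + ∑ t ∈ T, (((F n).card : ℝ) - ((B t).card : ℝ)) := hR
      _ = (1 + ∑ t ∈ T, (1 - ((B t).card : ℝ) / ((F n).card : ℝ))) * ((F n).card : ℝ) := by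
          rw [add_mul, one_mul, Finset.sum_mul]
          congr 1
          exact Finset.sum_congr rfl fun t _ => by
            rw [sub_mul, one_mul, div_mul_cancel₀ _ (ne_of_gt hmpos)]
  -- limsup argument
  set d := upperDensity F E with hd
  apply le_of_forall_pos_le_add
  intro ε hε
  set δ : ℝ := ε / (T.card + 1) with hδ
  have hδpos : 0 < δ := by positivity
  have hcob : IsCoboundedUnder (· ≤ ·) atTop a :=
    isCoboundedUnder_le_of_le atTop ha0
  have hfreq : ∃ᶠ n in atTop, d - δ < a n := by
    apply frequently_lt_of_lt_limsup hcob
    have : d = limsup a atTop := rfl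
    linarith [hδpos, this ▸ le_refl d]
  have hev : ∀ᶠ n in atTop, c n ≤ 1 + δ :=
    hctend.eventually (eventually_le_nhds (by linarith : (1:ℝ) < 1 + δ))
  obtain ⟨n, hn1, hn2, hn3⟩ := (hfreq.and_eventually (hev.and hkey)).exists
  have hmono : (T.card : ℝ) * (d - δ) ≤ (T.card : ℝ) * a n :=
    mul_le_mul_of_nonneg_left (le_of_lt hn1) (by positivity)
  have hfin : (T.card : ℝ) * (d - δ) ≤ 1 + δ := le_trans hmono (le_trans hn3 hn2)
  have hδε : ((T.card : ℝ) + 1) * δ = ε := by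
    rw [hδ]; field_simp
  nlinarith [hδpos, Nat.cast_nonneg (α := ℝ) T.card]

theorem stmt2 {G : Type*} [Group G] [Countable G] [DecidableEq G]
    (E : Set G) (F : ℕ → Finset G) (hF : IsFolner F) (hE : 0 < upperDensity F E) :
    LeftSyndetic {x : G | ∃ g ∈ E, ∃ h ∈ E, x = g * h⁻¹} := by
  classical
  have hEne : E.Nonempty := by
    by_contra h
    rw [Set.not_nonempty_iff_eq_empty] at h
    have : upperDensity F E = 0 := by
      simp [upperDensity, h]
    linarith
  set P : Finset G → Prop := fun T =>
    ∀ t ∈ T, ∀ t' ∈ T, t ≠ t' → Disjoint ((t * ·) '' E) ((t' * ·) '' E) with hP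
  have hbound : ∀ T, P T → T.card ≤ Nat.floor (1 / upperDensity F E) := by
    intro T hT
    have h1 := good_card_bound E F hF T hT
    have hle : (T.card : ℝ) ≤ 1 / upperDensity F E := by
      rw [le_div_iff₀ hE]; linarith
    exact Nat.le_floor hle
  set s : Set ℕ := {n | ∃ T : Finset G, P T ∧ T.card = n} with hs
  have hsne : s.Nonempty := ⟨0, ∅, by intro t ht; simp at ht, rfl⟩
  have hsbd : BddAbove s := ⟨Nat.floor (1 / upperDensity F E), by
    rintro n ⟨T, hT, rfl⟩; exact hbound T hT⟩
  obtain ⟨T₀, hT₀, hT₀c⟩ := Nat.sSup_mem hsne hsbd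
  refine ⟨T₀.image (·⁻¹), fun g => ?_⟩
  by_cases hcase : ∃ t ∈ T₀, ¬ Disjoint ((g * ·) '' E) ((t * ·) '' E)
  · obtain ⟨t, ht, hnd⟩ := hcase
    obtain ⟨x, hx1, hx2⟩ := Set.not_disjoint_iff.1 hnd
    obtain ⟨e1, he1, rfl⟩ := hx1
    obtain ⟨e2, he2, heq⟩ := hx2
    refine ⟨t⁻¹, Finset.mem_image_of_mem _ ht, e2, he2, e1, he1, ?_⟩
    have heq' : t * e2 = g * e1 := heq
    rw [eq_mul_inv_iff_mul_eq, mul_assoc, ← heq', inv_mul_cancel_left]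
  · push_neg at hcase
    exfalso
    obtain ⟨e, he⟩ := hEne
    have hg : g ∉ T₀ := by
      intro hgT
      exact Set.disjoint_left.1 (hcase g hgT) ⟨e, he, rfl⟩ ⟨e, he, rfl⟩
    have hP' : P (insert g T₀) := by
      intro t ht t' ht' hne
      rcases Finset.mem_insert.1 ht with h1 | h1 <;>
        rcases Finset.mem_insert.1 ht' with h2 | h2
      · exact absurd (h1.trans h2.symm) hne
      · rw [h1]; exact hcase t' h2
      · rw [h2]; exact (hcase t h1).symm
      · exact hT₀ t h1 t' h2 hne
    have hmem : (insert g T₀).card ∈ s := ⟨insert g T₀, hP', rfl⟩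
    have hle := le_csSup hsbd hmem
    rw [Finset.card_insert_of_notMem hg, hT₀c] at hle
    omega
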